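/- arXiv:1904.03123 — 2 statements merged into one kernel-verified Lean document; each statement's English description precedes it below -/
import Mathlib

section
/- The digamma function satisfies \Gamma'/\Gamma(s) = \log s + O(1/|s|) uniformly in the half-plane Re(s) \ge 0 as |s| \to \infty; that is, there exist constants C > 0 and R > 0 such that |\Gamma'(s)/\Gamma(s) - \log s| \le C/|s| whenever Re(s) \ge 0 and |s| \ge R. -/
open Complex Set Topology

lemma norm_le_norm_add_real {s : ℂ} (hs : 0 ≤ s.re) {t : ℝ} (ht : 0 ≤ t) :
    ‖s‖ ≤ ‖s + t‖ := by
  have h1 : ‖s‖ ^ 2 ≤ ‖s + t‖ ^ 2 := by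
    rw [Complex.sq_norm, Complex.sq_norm, Complex.normSq_apply, Complex.normSq_apply]
    simp only [Complex.add_re, Complex.add_im, Complex.ofReal_re, Complex.ofReal_im, add_zero]
    nlinarith
  have := norm_nonneg (s + t)
  have := norm_nonneg s
  nlinarith

lemma mvt01 {f f' : ℝ → ℂ} {C : ℝ}
    (hf : ∀ t ∈ Icc (0:ℝ) 1, HasDerivAt f (f' t) t)
    (hC : ∀ t ∈ Icc (0:ℝ) 1, ‖f' t‖ ≤ C) : ‖f 1 - f 0‖ ≤ C := by
  have := norm_image_sub_le_of_norm_deriv_le_segment'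
    (fun x hx => (hf x hx).hasDerivWithinAt) (fun x hx => hC x (Ico_subset_Icc_self hx))
    1 (right_mem_Icc.2 zero_le_one)
  simpa using this

lemma slit_of_pos_re {z : ℂ} (hz : 0 < z.re) : z ∈ Complex.slitPlane := Or.inl hz

-- ‖log(1+z) - z‖ ≤ ‖z‖^2 for re z ≥ 0
lemma one_le_norm_one_add {w : ℂ} (hw : 0 ≤ w.re) : 1 ≤ ‖1 + w‖ := by
  have h1 : 1 ≤ ‖1 + w‖ ^ 2 := by
    rw [Complex.sq_norm, Complex.normSq_apply]
    simp only [Complex.add_re, Complex.add_im, Complex.one_re, Complex.one_im, zero_add]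
    nlinarith [sq_nonneg w.im]
  have := norm_nonneg (1 + w)
  nlinarith

lemma log_one_add_sub_self {z : ℂ} (hz : 0 ≤ z.re) : ‖Complex.log (1 + z) - z‖ ≤ ‖z‖^2 := by
  have key : ∀ t ∈ Icc (0:ℝ) 1, HasDerivAt (fun t : ℝ => Complex.log (1 + t • z) - t • z)
      (z / (1 + t • z) - z) t := by
    intro t ht
    have hre : 0 < (1 + (t:ℂ) * z).re := by
      simp only [Complex.add_re, Complex.one_re, Complex.mul_re, Complex.ofReal_re,
        Complex.ofReal_im]
      nlinarith [ht.1]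
    have h1 : HasDerivAt (fun t : ℝ => 1 + (t:ℂ) * z) z t := by
      simpa using ((hasDerivAt_id (t:ℂ)).mul_const z).comp_ofReal.const_add 1
    have h2 := (Complex.hasDerivAt_log (slit_of_pos_re hre)).comp t h1
    have h3 : HasDerivAt (fun t : ℝ => (t:ℂ) * z) z t := by
      simpa using ((hasDerivAt_id (t:ℂ)).mul_const z).comp_ofReal
    simpa [Complex.real_smul, div_eq_inv_mul] using h2.fun_sub h3
  have bound : ∀ t ∈ Icc (0:ℝ) 1, ‖z / (1 + t • z) - z‖ ≤ ‖z‖^2 := by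
    intro t ht
    have hne : (1 + (t:ℂ) * z) ≠ 0 := by
      intro h
      have : (1 + (t:ℂ) * z).re = 0 := by rw [h]; simp
      simp only [Complex.add_re, Complex.one_re, Complex.mul_re, Complex.ofReal_re,
        Complex.ofReal_im] at this
      nlinarith [ht.1]
    have : z / (1 + (t:ℂ) * z) - z = -(t * z^2) / (1 + (t:ℂ) * z) := by
      rw [eq_div_iff hne, sub_mul, div_mul_cancel₀ _ hne]; ring
    simp only [Complex.real_smul]
    rw [this]
    rw [norm_div, norm_neg]
    have h1 : (1:ℝ) ≤ ‖1 + (t:ℂ) * z‖ := by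
      apply one_le_norm_one_add
      simp only [Complex.mul_re, Complex.ofReal_re, Complex.ofReal_im]
      nlinarith [ht.1]
    calc ‖(t:ℂ) * z^2‖ / ‖1 + (t:ℂ)*z‖ ≤ ‖(t:ℂ) * z^2‖ / 1 := by
          apply div_le_div_of_nonneg_left ?_ ?_ h1 <;> [positivity; norm_num]
    _ = |t| * ‖z‖^2 := by simp [norm_mul, norm_pow]
    _ ≤ 1 * ‖z‖^2 := by
          apply mul_le_mul_of_nonneg_right _ (by positivity)
          rw [_root_.abs_of_nonneg ht.1]; exact ht.2
    _ = ‖z‖^2 := one_mul _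
  have := mvt01 key bound
  simpa using this

lemma log_succ_sub_log_sub_inv {w : ℂ} (hw : 0 < w.re) :
    ‖Complex.log (w + 1) - Complex.log w - (w + 1)⁻¹‖ ≤ 1 / ‖w‖^2 := by
  have hw0 : w ≠ 0 := by intro h; rw [h] at hw; simp at hw
  have hnorm : 0 < ‖w‖ := norm_pos_iff.mpr hw0
  have key : ∀ t ∈ Icc (0:ℝ) 1, HasDerivAt (fun t : ℝ => Complex.log (w + t) - t • (w + 1)⁻¹)
      ((w + t)⁻¹ - (w + 1)⁻¹) t := by
    intro t ht
    have hre : 0 < (w + (t:ℂ)).re := by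
      simp only [Complex.add_re, Complex.ofReal_re]; linarith [ht.1]
    have h1 : HasDerivAt (fun t : ℝ => w + (t:ℂ)) 1 t := by
      simpa using (Complex.ofRealCLM.hasDerivAt (x := t)).const_add w
    have h2 := (Complex.hasDerivAt_log (slit_of_pos_re hre)).comp t h1
    have h3 : HasDerivAt (fun t : ℝ => t • (w + 1)⁻¹) ((w+1)⁻¹) t := by
      simpa [Complex.real_smul] using
        (Complex.ofRealCLM.hasDerivAt (x := t)).mul_const (w + 1)⁻¹
    simpa [mul_one] using h2.fun_sub h3
  have bound : ∀ t ∈ Icc (0:ℝ) 1, ‖(w + (t:ℂ))⁻¹ - (w + 1)⁻¹‖ ≤ 1 / ‖w‖^2 := by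
    intro t ht
    have hne1 : w + (t:ℂ) ≠ 0 := by
      intro h
      have : (w + (t:ℂ)).re = 0 := by rw [h]; simp
      simp only [Complex.add_re, Complex.ofReal_re] at this; linarith [ht.1]
    have hne2 : w + 1 ≠ 0 := by
      intro h
      have : (w + 1).re = 0 := by rw [h]; simp
      simp only [Complex.add_re, Complex.one_re] at this; linarith
    have heq : (w + (t:ℂ))⁻¹ - (w + 1)⁻¹ = ((1:ℂ) - t) / ((w + t) * (w + 1)) := by
      field_simp
      ring
    rw [heq, norm_div, norm_mul]
    have hb1 : ‖w‖ ≤ ‖w + (t:ℂ)‖ := norm_le_norm_add_real hw.le ht.1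
    have hb2 : ‖w‖ ≤ ‖w + 1‖ := by
      simpa using norm_le_norm_add_real hw.le (zero_le_one (α := ℝ))
    have hnum : ‖(1:ℂ) - (t:ℂ)‖ ≤ 1 := by
      rw [show (1:ℂ) - t = ((1 - t : ℝ) : ℂ) by push_cast; ring]
      rw [Complex.norm_real, Real.norm_eq_abs, _root_.abs_of_nonneg (by linarith [ht.2])]
      linarith [ht.1, ht.2]
    have hden : ‖w‖ * ‖w‖ ≤ ‖w + (t:ℂ)‖ * ‖w + 1‖ :=
      mul_le_mul hb1 hb2 hnorm.le (le_trans hnorm.le hb1)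
    calc ‖(1:ℂ) - (t:ℂ)‖ / (‖w + (t:ℂ)‖ * ‖w + 1‖) ≤ 1 / (‖w‖ * ‖w‖) :=
          div_le_div₀ zero_le_one hnum (by positivity) hden
      _ = 1 / ‖w‖^2 := by ring_nf
  have := mvt01 key bound
  have heq : Complex.log (w+1) - Complex.log w - (w+1)⁻¹ =
      (Complex.log (w + 1) - 1 • (w+1)⁻¹) - (Complex.log (w + 0) - (0:ℝ) • (w+1)⁻¹) := by
    push_cast; simp; ring
  rw [heq]
  simpa using this

lemma log_add_one_sub_log {s : ℂ} (h0 : 0 ≤ s.re) (hs : s ∈ Complex.slitPlane) :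
    ‖Complex.log (s + 1) - Complex.log s‖ ≤ 1 / ‖s‖ := by
  have hs0 : s ≠ 0 := Complex.slitPlane_ne_zero hs
  have hnorm : 0 < ‖s‖ := norm_pos_iff.mpr hs0
  have key : ∀ t ∈ Icc (0:ℝ) 1, HasDerivAt (fun t : ℝ => Complex.log (s + t)) ((s + t)⁻¹) t := by
    intro t ht
    have hslit : s + (t:ℂ) ∈ Complex.slitPlane := by
      rcases eq_or_lt_of_le ht.1 with h | h
      · simpa [← h] using hs
      · exact slit_of_pos_re (by simp only [Complex.add_re, Complex.ofReal_re]; linarith)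
    have h1 : HasDerivAt (fun t : ℝ => s + (t:ℂ)) 1 t := by
      simpa using (Complex.ofRealCLM.hasDerivAt (x := t)).const_add s
    simpa [mul_one, Function.comp_def] using (Complex.hasDerivAt_log hslit).comp t h1
  have bound : ∀ t ∈ Icc (0:ℝ) 1, ‖(s + (t:ℂ))⁻¹‖ ≤ 1 / ‖s‖ := by
    intro t ht
    rw [norm_inv, inv_eq_one_div]
    exact div_le_div₀ zero_le_one le_rfl hnorm (norm_le_norm_add_real h0 ht.1)
  have := mvt01 key bound
  simpa using this

lemma log_nat_add {s : ℂ} (h0 : 0 ≤ s.re) {n : ℕ} (hn : 1 ≤ n) :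
    ‖Complex.log (s + n) - Real.log n‖ ≤ ‖s‖ / n := by
  have hnpos : (0:ℝ) < n := by exact_mod_cast hn
  have key : ∀ t ∈ Icc (0:ℝ) 1, HasDerivAt (fun t : ℝ => Complex.log ((n:ℂ) + t • s))
      (s / ((n:ℂ) + t • s)) t := by
    intro t ht
    have hre : 0 < ((n:ℂ) + (t:ℂ) * s).re := by
      simp only [Complex.add_re, Complex.natCast_re, Complex.mul_re, Complex.ofReal_re,
        Complex.ofReal_im]
      nlinarith [ht.1]
    have h1 : HasDerivAt (fun t : ℝ => (n:ℂ) + (t:ℂ) * s) s t := by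
      simpa using ((hasDerivAt_id (t:ℂ)).mul_const s).comp_ofReal.const_add (n:ℂ)
    have h2 := (Complex.hasDerivAt_log (slit_of_pos_re hre)).comp t h1
    simpa [Complex.real_smul, div_eq_inv_mul, mul_comm, Function.comp_def] using h2
  have bound : ∀ t ∈ Icc (0:ℝ) 1, ‖s / ((n:ℂ) + t • s)‖ ≤ ‖s‖ / n := by
    intro t ht
    rw [norm_div]
    apply div_le_div₀ (norm_nonneg s) le_rfl hnpos
    calc (n:ℝ) = ((n:ℂ) + (t:ℂ) * s).re - ((t:ℂ) * s).re := by
          simp only [Complex.add_re, Complex.natCast_re]; ring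
      _ ≤ ((n:ℂ) + (t:ℂ) * s).re := by
          have : 0 ≤ ((t:ℂ) * s).re := by
            simp only [Complex.mul_re, Complex.ofReal_re, Complex.ofReal_im]
            nlinarith [ht.1]
          linarith
      _ ≤ ‖(n:ℂ) + (t:ℂ) * s‖ := Complex.re_le_norm _
      _ = ‖(n:ℂ) + t • s‖ := by rw [Complex.real_smul]
  have := mvt01 key bound
  have heq : Complex.log (s + n) - (Real.log n : ℂ) =
      Complex.log ((n:ℂ) + (1:ℝ) • s) - Complex.log ((n:ℂ) + (0:ℝ) • s) := by
    rw [Complex.natCast_log]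
    simp [add_comm]
  rw [heq]
  exact this

noncomputable def Hfun (n : ℕ) (s : ℂ) : ℂ :=
  s * Real.log n + Real.log (n.factorial) - ∑ k ∈ Finset.range (n + 1), Complex.log (s + k)

noncomputable def psifun (n : ℕ) (s : ℂ) : ℂ :=
  (Real.log n : ℂ) - ∑ k ∈ Finset.range (n + 1), (s + k)⁻¹

lemma s_add_nat_ne {s : ℂ} (hs : 0 < s.re) (k : ℕ) : s + (k:ℂ) ≠ 0 := by
  intro h
  have : (s + (k:ℂ)).re = 0 := by rw [h]; simp
  simp only [Complex.add_re, Complex.natCast_re] at this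
  have : (0:ℝ) ≤ (k:ℝ) := by positivity
  linarith

lemma exp_Hfun {n : ℕ} (hn : 1 ≤ n) {s : ℂ} (hs : 0 < s.re) :
    Complex.exp (Hfun n s) = Complex.GammaSeq s n := by
  have hn0 : (0:ℝ) < n := by exact_mod_cast hn
  have hfac : (0:ℝ) < (n.factorial : ℝ) := by exact_mod_cast n.factorial_pos
  rw [Hfun, Complex.GammaSeq]
  rw [sub_eq_add_neg, Complex.exp_add, Complex.exp_add, Complex.exp_neg]
  have e1 : Complex.exp (s * (Real.log n : ℂ)) = (n:ℂ) ^ s := by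
    rw [Complex.cpow_def_of_ne_zero (by exact_mod_cast hn0.ne'), Complex.natCast_log, mul_comm]
  have e2 : Complex.exp ((Real.log n.factorial : ℂ)) = (n.factorial : ℂ) := by
    rw [← Complex.ofReal_exp, Real.exp_log hfac]
    norm_cast
  have e3 : Complex.exp (∑ k ∈ Finset.range (n + 1), Complex.log (s + k)) =
      ∏ k ∈ Finset.range (n + 1), (s + k) := by
    rw [Complex.exp_sum]
    exact Finset.prod_congr rfl fun k _ => Complex.exp_log (s_add_nat_ne hs k)
  rw [e1, e2, e3, div_eq_mul_inv]

lemma hasDerivAt_Hfun {n : ℕ} {s : ℂ} (hs : 0 < s.re) :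
    HasDerivAt (Hfun n) (psifun n s) s := by
  have h1 : HasDerivAt (fun s : ℂ => s * (Real.log n : ℂ) + (Real.log n.factorial : ℂ))
      ((Real.log n : ℂ)) s := by
    simpa using ((hasDerivAt_id s).mul_const ((Real.log n : ℂ))).add_const ((Real.log n.factorial : ℝ) : ℂ)
  have h2 : HasDerivAt (fun s : ℂ => ∑ k ∈ Finset.range (n + 1), Complex.log (s + k))
      (∑ k ∈ Finset.range (n + 1), (s + k)⁻¹) s := by
    apply HasDerivAt.fun_sum
    intro k _
    have hre : 0 < (s + (k:ℂ)).re := by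
      simp only [Complex.add_re, Complex.natCast_re]
      have : (0:ℝ) ≤ (k:ℝ) := by positivity
      linarith
    have hk : HasDerivAt (fun s : ℂ => s + (k:ℂ)) 1 s := (hasDerivAt_id s).add_const _
    have := (Complex.hasDerivAt_log (slit_of_pos_re hre)).comp s hk
    simpa [Function.comp_def] using this
  unfold Hfun psifun
  exact h1.sub h2


lemma Hfun_diff_bound {r : ℝ} {n : ℕ} (hn : 1 ≤ n) {s : ℂ} (h0 : 0 ≤ s.re) (hr : ‖s‖ ≤ r) :
    ‖Hfun (n + 1) s - Hfun n s‖ ≤ (r + r ^ 2) / n ^ 2 := by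
  have hn0 : (0:ℝ) < n := by exact_mod_cast hn
  have hn10 : (0:ℝ) < (n:ℝ) + 1 := by linarith
  have hr0 : 0 ≤ r := le_trans (norm_nonneg s) hr
  set c : ℝ := (n:ℝ) + 1 with hc
  set z : ℂ := s / (c : ℂ) with hz
  have hzre : 0 ≤ z.re := by
    rw [hz, Complex.div_ofReal_re]
    positivity
  have hzne : (1:ℂ) + z ≠ 0 := by
    intro h
    have : ((1:ℂ) + z).re = 0 := by rw [h]; simp
    simp only [Complex.add_re, Complex.one_re] at this
    linarith
  have hlog : Complex.log (s + ((n:ℕ) + 1 : ℕ)) = (Real.log c : ℂ) + Complex.log (1 + z) := by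
    have hcne : (c : ℂ) ≠ 0 := by exact_mod_cast hn10.ne'
    have he : s + ((n:ℕ) + 1 : ℕ) = (c : ℂ) * (1 + z) := by
      rw [hz, mul_add, mul_one, mul_div_cancel₀ _ hcne, hc]
      push_cast
      ring
    rw [he, Complex.log_ofReal_mul hn10 hzne]
  have hdiff : Hfun (n + 1) s - Hfun n s
      = s * ((Real.log c - Real.log n : ℝ) : ℂ) - Complex.log (1 + z) := by
    rw [Hfun, Hfun, Finset.sum_range_succ (n := n + 1)]
    have hfac : Real.log ((n+1).factorial) = Real.log c + Real.log (n.factorial) := by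
      rw [Nat.factorial_succ]
      push_cast
      rw [Real.log_mul (by positivity) (by exact_mod_cast n.factorial_pos.ne')]
    rw [hfac, hlog]
    have hcast : (((n:ℕ) + 1 : ℕ) : ℝ) = c := by rw [hc]; push_cast; ring
    rw [hcast]
    push_cast
    ring
  rw [hdiff]
  set L : ℝ := Real.log c - Real.log n with hL
  have hLub : L ≤ 1 / n := by
    rw [hL, ← Real.log_div (by positivity) (by positivity)]
    have := Real.log_le_sub_one_of_pos (x := c/n) (by positivity)
    have h2 : c/(n:ℝ) - 1 = 1/n := by rw [hc]; field_simp; ring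
    linarith
  have hLlb : 1 / c ≤ L := by
    have := Real.log_le_sub_one_of_pos (x := (n:ℝ)/c) (by positivity)
    have h2 : Real.log ((n:ℝ)/c) = -L := by
      rw [Real.log_div (by positivity) (by positivity), hL]; ring
    have h3 : (n:ℝ)/c - 1 = -(1/c) := by rw [hc]; field_simp; ring
    rw [h2, h3] at this
    linarith
  have key : s * (L : ℂ) - Complex.log (1 + z) = (s * (L : ℂ) - z) + (z - Complex.log (1 + z)) := by
    ring
  rw [key]
  have b1 : ‖s * (L : ℂ) - z‖ ≤ r / n ^ 2 := by
    have heq2 : s * (L : ℂ) - z = s * ((L - 1/c : ℝ) : ℂ) := by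
      rw [hz]
      have hcne : (c : ℂ) ≠ 0 := by exact_mod_cast hn10.ne'
      push_cast
      field_simp
    rw [heq2, norm_mul, Complex.norm_real, Real.norm_eq_abs]
    have habs : |L - 1/c| ≤ 1 / n ^ 2 := by
      rw [abs_le]
      have hpos : (0:ℝ) ≤ 1/(n:ℝ)^2 := by positivity
      constructor
      · linarith
      · have : 1/(n:ℝ) - 1/c ≤ 1 / n^2 := by
          rw [hc, div_sub_div _ _ (by positivity) (by positivity),
            div_le_div_iff₀ (by positivity) (by positivity)]
          nlinarith
        linarith
    calc ‖s‖ * |L - 1/c| ≤ r * (1 / n^2) := mul_le_mul hr habs (abs_nonneg _) hr0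
      _ = r / n^2 := by ring
  have b2 : ‖z - Complex.log (1 + z)‖ ≤ r ^ 2 / n ^ 2 := by
    have hb := log_one_add_sub_self hzre
    rw [← norm_neg, neg_sub]
    have hznorm : ‖z‖ ≤ r / (n:ℝ) := by
      rw [hz, norm_div, Complex.norm_real, Real.norm_eq_abs, _root_.abs_of_nonneg hn10.le, hc]
      gcongr
      · linarith
    calc ‖Complex.log (1 + z) - z‖ ≤ ‖z‖^2 := hb
      _ ≤ (r / n)^2 := by gcongr
      _ = r^2/n^2 := by ring
  calc ‖(s * (L : ℂ) - z) + (z - Complex.log (1 + z))‖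
      ≤ ‖s * (L : ℂ) - z‖ + ‖z - Complex.log (1 + z)‖ := norm_add_le _ _
    _ ≤ r / n^2 + r^2/n^2 := add_le_add b1 b2
    _ = (r + r^2)/n^2 := by ring

noncomputable def Hlim (z : ℂ) : ℂ := Hfun 1 z + ∑' m : ℕ, (Hfun (m + 2) z - Hfun (m + 1) z)

lemma tuo_const {α β ι : Type*} [UniformSpace β] {g : α → β} {K : Set α} {φ : Filter ι} :
    TendstoUniformlyOn (fun _ => g) g φ K := by
  intro u hu
  filter_upwards with n x _
  exact refl_mem_uniformity hu

lemma unifH {s₀ : ℂ} (hs₀ : 0 < s₀.re) :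
    ∃ δ > 0, (∀ z ∈ Metric.closedBall s₀ δ, 0 < z.re) ∧
      TendstoUniformlyOn (fun N z => Hfun (N + 1) z) Hlim Filter.atTop
        (Metric.closedBall s₀ δ) := by
  set δ := s₀.re / 2 with hδ
  have hδ0 : 0 < δ := by positivity
  set r := ‖s₀‖ + δ with hr
  have hre : ∀ z ∈ Metric.closedBall s₀ δ, 0 < z.re := by
    intro z hz
    rw [Metric.mem_closedBall, dist_eq_norm] at hz
    have := Complex.abs_re_le_norm (z - s₀)
    have h2 : |z.re - s₀.re| ≤ δ := by
      rw [← Complex.sub_re]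
      exact le_trans this hz
    rw [abs_le] at h2
    linarith
  have hnorm : ∀ z ∈ Metric.closedBall s₀ δ, ‖z‖ ≤ r := by
    intro z hz
    rw [Metric.mem_closedBall, dist_eq_norm] at hz
    calc ‖z‖ = ‖s₀ + (z - s₀)‖ := by ring_nf
      _ ≤ ‖s₀‖ + ‖z - s₀‖ := norm_add_le _ _
      _ ≤ r := by rw [hr]; linarith
  refine ⟨δ, hδ0, hre, ?_⟩
  have hr0 : 0 ≤ r := le_trans (norm_nonneg s₀) (by linarith)
  have hu : Summable (fun m : ℕ => (r + r ^ 2) / ((m:ℝ) + 1) ^ 2) := by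
    have h1 : Summable (fun m : ℕ => 1 / ((m:ℝ) + 1) ^ 2) := by
      have := (Real.summable_one_div_nat_pow (p := 2)).mpr one_lt_two
      have h2 := (summable_nat_add_iff (f := fun n : ℕ => 1 / (n:ℝ) ^ 2) 1).mpr this
      refine h2.congr fun m => ?_
      push_cast
      ring_nf
    have := h1.mul_left (r + r ^ 2)
    refine this.congr fun m => ?_
    ring
  have hfu : ∀ (m : ℕ), ∀ z ∈ Metric.closedBall s₀ δ,
      ‖Hfun (m + 2) z - Hfun (m + 1) z‖ ≤ (r + r ^ 2) / ((m:ℝ) + 1) ^ 2 := by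
    intro m z hz
    have := Hfun_diff_bound (n := m + 1) (by omega) (hre z hz).le (hnorm z hz)
    calc ‖Hfun (m + 1 + 1) z - Hfun (m + 1) z‖ ≤ (r + r ^ 2) / ((m + 1 : ℕ) : ℝ) ^ 2 := this
      _ = (r + r ^ 2) / ((m:ℝ) + 1) ^ 2 := by push_cast; ring
  have htu := tendstoUniformlyOn_tsum_nat hu hfu (s := Metric.closedBall s₀ δ)
  have := (tuo_const (g := Hfun 1) (φ := Filter.atTop (α := ℕ))).add htu
  have h2 := this.congr (F' := fun N z => Hfun (N + 1) z) ?_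
  · apply h2.congr_right
    intro z _
    rfl
  filter_upwards with N
  intro z _
  simp only [Pi.add_apply]
  rw [show (∑ m ∈ Finset.range N, (Hfun (m + 2) z - Hfun (m + 1) z))
      = Hfun (N + 1) z - Hfun 1 z from by
    simpa using Finset.sum_range_sub (f := fun m => Hfun (m + 1) z) N]
  ring

lemma expUnif {s₀ : ℂ} (hs₀ : 0 < s₀.re) :
    ∃ δ > 0, TendstoUniformlyOn (fun N z => Complex.exp (Hfun (N + 1) z)) Complex.Gamma
      Filter.atTop (Metric.closedBall s₀ δ) := by
  obtain ⟨δ, hδ0, hre, hH⟩ := unifH hs₀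
  set K := Metric.closedBall s₀ δ with hK
  have hKc : IsCompact K := isCompact_closedBall s₀ δ
  have hcont : ∀ N : ℕ, ContinuousOn (fun z => Hfun (N + 1) z) K := fun N z hz =>
    ((hasDerivAt_Hfun (n := N + 1) (hre z hz)).differentiableAt.continuousAt).continuousWithinAt
  have hHc : ContinuousOn Hlim K :=
    hH.continuousOn (Filter.Eventually.of_forall hcont).frequently
  obtain ⟨M, hM⟩ := hKc.exists_bound_of_continuousOn (Complex.continuous_exp.comp_continuousOn hHc)
  have hM0 : 0 ≤ M := le_trans (norm_nonneg _)
    (hM s₀ (Metric.mem_closedBall_self hδ0.le))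
  have hexp : TendstoUniformlyOn (fun N z => Complex.exp (Hfun (N + 1) z))
      (fun z => Complex.exp (Hlim z)) Filter.atTop K := by
    rw [Metric.tendstoUniformlyOn_iff]
    intro ε hε
    have hM1 : 0 < M + 1 := by linarith
    set d : ℝ := min 1 (ε / (2 * (M + 1))) with hd
    have hd0 : 0 < d := lt_min one_pos (by positivity)
    filter_upwards [Metric.tendstoUniformlyOn_iff.mp hH d hd0] with N hN z hz
    have hdist := hN z hz
    rw [dist_eq_norm] at hdist ⊢
    have hsplit : Complex.exp (Hfun (N + 1) z) =
        Complex.exp (Hlim z) * Complex.exp (Hfun (N + 1) z - Hlim z) := by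
      rw [← Complex.exp_add]
      congr 1
      ring
    have hnd : ‖Hfun (N + 1) z - Hlim z‖ < d := by
      rw [← norm_neg, neg_sub]; exact hdist
    have h1 : ‖Complex.exp (Hlim z) - Complex.exp (Hfun (N + 1) z)‖
        = ‖Complex.exp (Hlim z)‖ * ‖Complex.exp (Hfun (N + 1) z - Hlim z) - 1‖ := by
      rw [← norm_neg, neg_sub, hsplit, ← norm_mul]
      congr 1
      ring
    rw [h1]
    have h2 : ‖Complex.exp (Hfun (N + 1) z - Hlim z) - 1‖
        ≤ 2 * ‖Hfun (N + 1) z - Hlim z‖ :=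
      Complex.norm_exp_sub_one_le (le_trans hnd.le (min_le_left _ _))
    calc ‖Complex.exp (Hlim z)‖ * ‖Complex.exp (Hfun (N + 1) z - Hlim z) - 1‖
        ≤ (M + 1) * (2 * ‖Hfun (N + 1) z - Hlim z‖) := by
          have hMz := hM z hz
          simp only [Function.comp_apply] at hMz
          apply mul_le_mul (by linarith) h2 (norm_nonneg _) hM1.le
      _ < (M + 1) * (2 * d) := by
          apply mul_lt_mul_of_pos_left _ hM1
          linarith
      _ ≤ (M + 1) * (2 * (ε / (2 * (M + 1)))) := by
          apply mul_le_mul_of_nonneg_left _ hM1.le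
          have := min_le_right 1 (ε / (2 * (M + 1)))
          linarith [this]
      _ = ε := by field_simp
  have hEq : Set.EqOn Complex.Gamma (fun z => Complex.exp (Hlim z)) K := by
    intro z hz
    have ha : Filter.Tendsto (fun N : ℕ => Complex.exp (Hfun (N + 1) z)) Filter.atTop
        (𝓝 (Complex.exp (Hlim z))) := hexp.tendsto_at hz
    have hb : Filter.Tendsto (fun N : ℕ => Complex.exp (Hfun (N + 1) z)) Filter.atTop
        (𝓝 (Complex.Gamma z)) := by
      have h3 : Filter.Tendsto (fun N : ℕ => Complex.GammaSeq z (N + 1)) Filter.atTop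
          (𝓝 (Complex.Gamma z)) :=
        (Complex.GammaSeq_tendsto_Gamma z).comp (Filter.tendsto_add_atTop_nat 1)
      apply h3.congr
      intro N
      exact (exp_Hfun (by omega) (hre z hz)).symm
    exact tendsto_nhds_unique hb ha
  exact ⟨δ, hδ0, hexp.congr_right hEq.symm⟩

lemma gammaTLU : TendstoLocallyUniformlyOn (fun N z => Complex.exp (Hfun (N + 1) z))
    Complex.Gamma Filter.atTop {z : ℂ | 0 < z.re} := by
  intro u hu x hx
  obtain ⟨δ, hδ0, htuo⟩ := expUnif hx
  exact ⟨Metric.closedBall x δ,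
    mem_nhdsWithin_of_mem_nhds (Metric.closedBall_mem_nhds x hδ0), htuo u hu⟩

lemma psifun_tendsto {s : ℂ} (hs : 0 < s.re) :
    Filter.Tendsto (fun n : ℕ => psifun n s) Filter.atTop
      (𝓝 (deriv Complex.Gamma s / Complex.Gamma s)) := by
  have hU : IsOpen {z : ℂ | 0 < z.re} := isOpen_lt continuous_const Complex.continuous_re
  have hdiffF : ∀ᶠ N in Filter.atTop,
      DifferentiableOn ℂ (fun z => Complex.exp (Hfun (N + 1) z)) {z : ℂ | 0 < z.re} :=
    Filter.Eventually.of_forall fun N z hz =>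
      ((hasDerivAt_Hfun (n := N + 1) hz).cexp).differentiableAt.differentiableWithinAt
  have hd := gammaTLU.deriv hdiffF hU
  have hder : Filter.Tendsto (fun N : ℕ => deriv (fun z => Complex.exp (Hfun (N + 1) z)) s)
      Filter.atTop (𝓝 (deriv Complex.Gamma s)) := hd.tendsto_at hs
  have hvalue : Filter.Tendsto (fun N : ℕ => Complex.exp (Hfun (N + 1) s)) Filter.atTop
      (𝓝 (Complex.Gamma s)) := by
    have h3 : Filter.Tendsto (fun N : ℕ => Complex.GammaSeq s (N + 1)) Filter.atTop
        (𝓝 (Complex.Gamma s)) :=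
      (Complex.GammaSeq_tendsto_Gamma s).comp (Filter.tendsto_add_atTop_nat 1)
    apply h3.congr
    intro N
    exact (exp_Hfun (by omega) hs).symm
  have hΓ : Complex.Gamma s ≠ 0 := Complex.Gamma_ne_zero_of_re_pos hs
  have hdiv := hder.div hvalue hΓ
  have heq : ∀ N : ℕ, deriv (fun z => Complex.exp (Hfun (N + 1) z)) s
      / Complex.exp (Hfun (N + 1) s) = psifun (N + 1) s := by
    intro N
    rw [((hasDerivAt_Hfun (n := N + 1) hs).cexp).deriv]
    rw [mul_comm, mul_div_assoc, div_self (Complex.exp_ne_zero _), mul_one]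
  have h5 : Filter.Tendsto (fun N : ℕ => psifun (N + 1) s) Filter.atTop
      (𝓝 (deriv Complex.Gamma s / Complex.Gamma s)) := by
    apply hdiv.congr heq
  exact (Filter.tendsto_add_atTop_iff_nat 1).mp h5

lemma normsq_add_nat {s : ℂ} (h0 : 0 ≤ s.re) {c : ℝ} (hc : 0 ≤ c) :
    ‖s‖ ^ 2 + c ^ 2 ≤ ‖s + (c:ℂ)‖ ^ 2 := by
  simp only [Complex.sq_norm] at *
  rw [Complex.normSq_apply, Complex.normSq_apply]
  simp only [Complex.add_re, Complex.add_im, Complex.ofReal_re, Complex.ofReal_im, add_zero]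
  nlinarith

lemma est1 {s : ℂ} (hs : 1 ≤ s.re) :
    ‖deriv Complex.Gamma s / Complex.Gamma s - Complex.log s‖ ≤ 4 / ‖s‖ := by
  have hs0 : 0 < s.re := by linarith
  set x := ‖s‖ with hx
  have hx1 : 1 ≤ x := le_trans hs (le_trans (le_abs_self _) (Complex.abs_re_le_norm s))
  have hx0 : 0 < x := by linarith
  have hsne : s ≠ 0 := by intro h; rw [h] at hs0; simp at hs0
  -- per-term bound
  set a : ℕ → ℂ := fun k => Complex.log (s + (k + 1 : ℕ)) - Complex.log (s + k)
    - (s + ((k + 1 : ℕ) : ℂ))⁻¹ with ha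
  have habound : ∀ k : ℕ, ‖a k‖ ≤ 1 / ‖s + (k:ℂ)‖ ^ 2 := by
    intro k
    have hw : 0 < (s + (k:ℂ)).re := by
      simp only [Complex.add_re, Complex.natCast_re]
      have : (0:ℝ) ≤ (k:ℝ) := by positivity
      linarith
    have := log_succ_sub_log_sub_inv hw
    have hcast : s + ((k + 1 : ℕ) : ℂ) = s + (k:ℂ) + 1 := by push_cast; ring
    rw [ha]
    simp only [hcast]
    exact this
  -- identity
  have hiden : ∀ n : ℕ, psifun n s - Complex.log s =
      ((Real.log n : ℂ) - Complex.log (s + n)) + (∑ k ∈ Finset.range n, a k) - s⁻¹ := by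
    intro n
    have htel : ∑ k ∈ Finset.range n, (Complex.log (s + (k + 1 : ℕ)) - Complex.log (s + k))
        = Complex.log (s + n) - Complex.log (s + (0:ℕ)) :=
      Finset.sum_range_sub (f := fun k => Complex.log (s + k)) n
    have hsplit : ∑ k ∈ Finset.range n, a k
        = (Complex.log (s + n) - Complex.log s) - ∑ k ∈ Finset.range n, (s + ((k+1:ℕ):ℂ))⁻¹ := by
      rw [ha]
      rw [Finset.sum_sub_distrib, htel]
      norm_num
    rw [hsplit, psifun]
    rw [Finset.sum_range_succ' (f := fun k => (s + (k:ℂ))⁻¹) n]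
    push_cast
    ring
  -- sum bound
  have hsumbound : ∀ n : ℕ, ∑ k ∈ Finset.range n, ‖a k‖ ≤ 3 / x := by
    intro n
    cases n with
    | zero => simp; positivity
    | succ m =>
      rw [Finset.sum_range_succ' (f := fun k => ‖a k‖) m]
      have h0 : ‖a 0‖ ≤ 1 / x := by
        have := habound 0
        simp only [Nat.cast_zero, add_zero] at this
        calc ‖a 0‖ ≤ 1 / x ^ 2 := by simpa using this
          _ ≤ 1 / x := by
            rw [div_le_div_iff₀ (by positivity) hx0]
            nlinarith
      have hterm : ∀ k ∈ Finset.range m, ‖a (k + 1)‖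
          ≤ 2 * (1 / (x + k) - 1 / (x + (k + 1))) := by
        intro k _
        have hk0 : (0:ℝ) ≤ (k:ℝ) := by positivity
        have hden : x ^ 2 + ((k:ℝ) + 1) ^ 2 ≤ ‖s + ((k + 1 : ℕ):ℂ)‖ ^ 2 := by
          have := normsq_add_nat (le_of_lt hs0) (c := (k:ℝ) + 1) (by positivity)
          have hcast : (((k:ℝ) + 1 : ℝ) : ℂ) = ((k + 1 : ℕ) : ℂ) := by push_cast; ring
          rw [hcast] at this
          exact this
      
        have hpos : 0 < ‖s + ((k + 1 : ℕ):ℂ)‖ ^ 2 := lt_of_lt_of_le (by positivity) hden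
        have h1 : 1 / ‖s + ((k + 1 : ℕ):ℂ)‖ ^ 2 ≤ 2 / (x + (k + 1)) ^ 2 := by
          rw [div_le_div_iff₀ hpos (by positivity)]
          nlinarith [sq_nonneg (x - ((k:ℝ) + 1))]
        have h2 : 2 / (x + (k + 1)) ^ 2 ≤ 2 * (1 / (x + k) - 1 / (x + (k + 1))) := by
          have he : 1 / (x + (k:ℝ)) - 1 / (x + ((k:ℝ) + 1)) = 1 / ((x + k) * (x + (k + 1))) := by
            rw [div_sub_div _ _ (by positivity) (by positivity)]
            congr 1
            ring
          rw [he, mul_one_div, div_le_div_iff₀ (by positivity) (by positivity)]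
          nlinarith
        calc ‖a (k + 1)‖ ≤ 1 / ‖s + ((k + 1 : ℕ):ℂ)‖ ^ 2 := habound (k + 1)
          _ ≤ 2 / (x + (k + 1)) ^ 2 := h1
          _ ≤ 2 * (1 / (x + k) - 1 / (x + (k + 1))) := h2
      have htel2 : ∑ k ∈ Finset.range m, (1 / (x + (k:ℝ)) - 1 / (x + ((k:ℝ) + 1)))
          = 1 / x - 1 / (x + m) := by
        have := Finset.sum_range_sub' (f := fun k : ℕ => 1 / (x + (k:ℝ))) m
        simpa using this
      calc ∑ k ∈ Finset.range m, ‖a (k + 1)‖ + ‖a 0‖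
          ≤ (∑ k ∈ Finset.range m, 2 * (1 / (x + (k:ℝ)) - 1 / (x + ((k:ℝ) + 1)))) + 1 / x := by
            apply add_le_add _ h0
            exact Finset.sum_le_sum hterm
        _ = 2 * (1 / x - 1 / (x + m)) + 1 / x := by
            rw [← Finset.mul_sum, htel2]
        _ ≤ 3 / x := by
            have : 0 ≤ 1 / (x + (m:ℝ)) := by positivity
            have h3 : 2 * (1/x) + 1/x = 3/x := by ring
            linarith
  -- per-n bound
  have hperN : ∀ n : ℕ, 1 ≤ n → ‖psifun n s - Complex.log s‖ ≤ 4 / x + x / n := by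
    intro n hn
    rw [hiden n]
    have b1 : ‖(Real.log n : ℂ) - Complex.log (s + n)‖ ≤ x / n := by
      rw [← norm_neg, neg_sub]
      exact log_nat_add hs0.le hn
    have b2 : ‖∑ k ∈ Finset.range n, a k‖ ≤ 3 / x :=
      le_trans (norm_sum_le _ _) (hsumbound n)
    have b3 : ‖s⁻¹‖ ≤ 1 / x := by rw [norm_inv, hx]; exact le_of_eq (inv_eq_one_div _)
    calc ‖((Real.log n : ℂ) - Complex.log (s + n)) + (∑ k ∈ Finset.range n, a k) - s⁻¹‖
        ≤ ‖((Real.log n : ℂ) - Complex.log (s + n)) + (∑ k ∈ Finset.range n, a k)‖ + ‖s⁻¹‖ :=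
          norm_sub_le _ _
      _ ≤ ‖(Real.log n : ℂ) - Complex.log (s + n)‖ + ‖∑ k ∈ Finset.range n, a k‖ + ‖s⁻¹‖ := by
          have := norm_add_le ((Real.log n : ℂ) - Complex.log (s + n))
            (∑ k ∈ Finset.range n, a k)
          linarith
      _ ≤ x / n + 3 / x + 1 / x := by linarith
      _ = 4 / x + x / n := by ring
  -- take the limit
  have hlim : Filter.Tendsto (fun n : ℕ => ‖psifun n s - Complex.log s‖) Filter.atTop
      (𝓝 ‖deriv Complex.Gamma s / Complex.Gamma s - Complex.log s‖) :=
    ((psifun_tendsto hs0).sub tendsto_const_nhds).norm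
  have hrhs : Filter.Tendsto (fun n : ℕ => 4 / x + x / n) Filter.atTop (𝓝 (4 / x)) := by
    have := tendsto_const_nhds (x := x) (f := Filter.atTop (α := ℕ))
    have h2 : Filter.Tendsto (fun n : ℕ => x / n) Filter.atTop (𝓝 0) :=
      Filter.Tendsto.div_atTop tendsto_const_nhds tendsto_natCast_atTop_atTop
    simpa using (tendsto_const_nhds (x := 4 / x)).add h2
  apply le_of_tendsto_of_tendsto hlim hrhs
  filter_upwards [Filter.eventually_ge_atTop 1] with n hn
  exact hperN n hn

theorem stmt2 :
    ∃ C : ℝ, 0 < C ∧ ∃ R : ℝ, 0 < R ∧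
      ∀ s : ℂ, 0 ≤ s.re → R ≤ ‖s‖ →
        ‖deriv Complex.Gamma s / Complex.Gamma s - Complex.log s‖ ≤
          C / ‖s‖ := by
  refine ⟨6, by norm_num, 1, by norm_num, ?_⟩
  intro s hre habs
  have hx0 : (0:ℝ) < ‖s‖ := lt_of_lt_of_le one_pos habs
  have hsne : s ≠ 0 := by
    intro h; rw [h] at hx0; simp at hx0
  have hnorm : (1:ℝ) ≤ ‖s‖ := habs
  have hslit : s ∈ Complex.slitPlane := by
    rcases lt_or_eq_of_le hre with h | h
    · exact Or.inl h
    · right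
      intro him
      apply hsne
      exact Complex.ext (by simpa using h.symm) (by simpa using him)
  have hnotneg : ∀ m : ℕ, s ≠ -m := by
    intro m h
    rcases Nat.eq_zero_or_pos m with hm | hm
    · rw [hm] at h; simp at h; exact hsne h
    · have : s.re = -(m:ℝ) := by rw [h]; simp
      have hm' : (1:ℝ) ≤ (m:ℝ) := by exact_mod_cast hm
      linarith
  have hnotneg1 : ∀ m : ℕ, s + 1 ≠ -m := by
    intro m h
    have : (s + 1).re = -(m:ℝ) := by rw [h]; simp
    simp only [Complex.add_re, Complex.one_re] at this
    have hm' : (0:ℝ) ≤ (m:ℝ) := by positivity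
    linarith
  have hdΓ : DifferentiableAt ℂ Complex.Gamma s := Complex.differentiableAt_Gamma s hnotneg
  have hd1 : DifferentiableAt ℂ Complex.Gamma (s + 1) := Complex.differentiableAt_Gamma _ hnotneg1
  -- recurrence for the digamma
  have hrec : deriv Complex.Gamma (s + 1) = Complex.Gamma s + s * deriv Complex.Gamma s := by
    have hL : HasDerivAt (fun z : ℂ => Complex.Gamma (z + 1)) (deriv Complex.Gamma (s + 1)) s := by
      have := (hd1.hasDerivAt).comp s ((hasDerivAt_id s).add_const 1)
      simpa [Function.comp_def] using this
    have hR : HasDerivAt (fun z : ℂ => z * Complex.Gamma z)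
        (Complex.Gamma s + s * deriv Complex.Gamma s) s := by
      have := (hasDerivAt_id s).fun_mul hdΓ.hasDerivAt
      simpa [hdΓ.hasDerivAt.deriv, add_comm] using this
    have hev : (fun z : ℂ => Complex.Gamma (z + 1)) =ᶠ[𝓝 s] (fun z : ℂ => z * Complex.Gamma z) := by
      filter_upwards [isOpen_compl_singleton.mem_nhds (by simpa using hsne)] with z hz
      exact Complex.Gamma_add_one z hz
    exact ((hR.congr_of_eventuallyEq hev).unique hL).symm
  have hΓne : Complex.Gamma s ≠ 0 := Complex.Gamma_ne_zero hnotneg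
  have hre1 : 1 ≤ (s + 1).re := by simp only [Complex.add_re, Complex.one_re]; linarith
  have hkey : deriv Complex.Gamma s / Complex.Gamma s - Complex.log s
      = (deriv Complex.Gamma (s + 1) / Complex.Gamma (s + 1) - Complex.log (s + 1))
        + (Complex.log (s + 1) - Complex.log s) - s⁻¹ := by
    have hΓ1 : Complex.Gamma (s + 1) = s * Complex.Gamma s := Complex.Gamma_add_one s hsne
    rw [hrec, hΓ1]
    field_simp
    ring
  rw [hkey]
  have b1 : ‖deriv Complex.Gamma (s + 1) / Complex.Gamma (s + 1) - Complex.log (s + 1)‖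
      ≤ 4 / ‖s‖ := by
    have := est1 hre1
    have hmono : ‖s‖ ≤ ‖s + 1‖ := by
      simpa using norm_le_norm_add_real hre (zero_le_one (α := ℝ))
    calc ‖deriv Complex.Gamma (s + 1) / Complex.Gamma (s + 1) - Complex.log (s + 1)‖
        ≤ 4 / ‖s + 1‖ := this
      _ ≤ 4 / ‖s‖ :=
        div_le_div_of_nonneg_left (by norm_num) (lt_of_lt_of_le one_pos hnorm) hmono
  have b2 : ‖Complex.log (s + 1) - Complex.log s‖ ≤ 1 / ‖s‖ := log_add_one_sub_log hre hslit
  have b3 : ‖s⁻¹‖ ≤ 1 / ‖s‖ := by rw [norm_inv]; exact le_of_eq (inv_eq_one_div _)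
  calc ‖(deriv Complex.Gamma (s + 1) / Complex.Gamma (s + 1) - Complex.log (s + 1))
        + (Complex.log (s + 1) - Complex.log s) - s⁻¹‖
      ≤ ‖(deriv Complex.Gamma (s + 1) / Complex.Gamma (s + 1) - Complex.log (s + 1))
        + (Complex.log (s + 1) - Complex.log s)‖ + ‖s⁻¹‖ := norm_sub_le _ _
    _ ≤ ‖deriv Complex.Gamma (s + 1) / Complex.Gamma (s + 1) - Complex.log (s + 1)‖
        + ‖Complex.log (s + 1) - Complex.log s‖ + ‖s⁻¹‖ := by
        have := norm_add_le (deriv Complex.Gamma (s + 1) / Complex.Gamma (s + 1)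
          - Complex.log (s + 1)) (Complex.log (s + 1) - Complex.log s)
        linarith
    _ ≤ 4 / ‖s‖ + 1 / ‖s‖ + 1 / ‖s‖ := by linarith
    _ = 6 / ‖s‖ := by ring
end

section
/- For each \tau \in [0,1], the function f(s, \tau) = (1 - \tau)(1 + \sqrt{5} \cdot 5^{-s}) \zeta(s) + \tau L(s, \psi) satisfies the functional equation f(s, \tau) = 5^{-s+1/2} \cdot 2 (2\pi)^{s-1} \Gamma(1 - s) \sin(\pi s / 2) f(1 - s, \tau), where \psi is the Dirichlet character mod 5 with \psi(2) = -1. -/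
open Complex

private lemma zmodLFunction_const_mul {N : ℕ} [NeZero N] (c : ℂ) (Φ : ZMod N → ℂ) (s : ℂ) :
    ZMod.LFunction (fun j => c * Φ j) s = c * ZMod.LFunction Φ s := by
  simp only [ZMod.LFunction, Finset.mul_sum]
  congr 1 with j
  ring

private lemma gauss5 (ψ : DirichletCharacter ℂ 5) (h0 : ψ 0 = 0) (h1 : ψ 1 = 1) (h2 : ψ 2 = -1)
    (h3 : ψ 3 = -1) (h4 : ψ 4 = 1) :
    gaussSum ψ ZMod.stdAddChar = (Real.sqrt 5 : ℂ) := by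
  have e : ∀ j : ℤ, ZMod.stdAddChar ((j : ZMod 5)) = Complex.exp (2 * Real.pi * I * j / 5) :=
    fun j => ZMod.stdAddChar_coe j
  rw [gaussSum]
  rw [show (Finset.univ : Finset (ZMod 5)) = {0, 1, 2, 3, 4} by decide]
  rw [Finset.sum_insert (by decide), Finset.sum_insert (by decide), Finset.sum_insert (by decide),
    Finset.sum_insert (by decide), Finset.sum_singleton]
  rw [h0, h1, h2, h3, h4]
  have e1 := e 1; have e2 := e 2; have e3 := e 3; have e4 := e 4
  push_cast at e1 e2 e3 e4
  rw [e1, e2, e3, e4]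
  have h2pi : Complex.exp (2 * (Real.pi:ℂ) * I) = 1 := Complex.exp_two_pi_mul_I
  have k3 : Complex.exp (2 * (Real.pi:ℂ) * I * 3 / 5) = Complex.exp (-(2 * (Real.pi:ℂ) * I * 2 / 5)) := by
    rw [show (2 * (Real.pi:ℂ) * I * 3 / 5) = -(2 * (Real.pi:ℂ) * I * 2 / 5) + 2 * (Real.pi:ℂ) * I by ring,
      Complex.exp_add, h2pi, mul_one]
  have k4 : Complex.exp (2 * (Real.pi:ℂ) * I * 4 / 5) = Complex.exp (-(2 * (Real.pi:ℂ) * I * 1 / 5)) := by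
    rw [show (2 * (Real.pi:ℂ) * I * 4 / 5) = -(2 * (Real.pi:ℂ) * I * 1 / 5) + 2 * (Real.pi:ℂ) * I by ring,
      Complex.exp_add, h2pi, mul_one]
  have cc1 : Complex.exp (2 * (Real.pi:ℂ) * I * 1 / 5) + Complex.exp (-(2 * (Real.pi:ℂ) * I * 1 / 5)) =
      2 * Complex.cos (2 * (Real.pi:ℂ) / 5) := by
    rw [Complex.two_cos]; ring_nf
  have cc2 : Complex.exp (2 * (Real.pi:ℂ) * I * 2 / 5) + Complex.exp (-(2 * (Real.pi:ℂ) * I * 2 / 5)) =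
      2 * Complex.cos (2 * (Real.pi:ℂ) * 2 / 5) := by
    rw [Complex.two_cos]; ring_nf
  have creal : 2 * Real.cos (2*Real.pi/5) - 2 * Real.cos (2*Real.pi*2/5) = Real.sqrt 5 := by
    have c1 : Real.cos (2*Real.pi/5) = 2 * Real.cos (Real.pi/5)^2 - 1 := by
      rw [show 2*Real.pi/5 = 2*(Real.pi/5) by ring, Real.cos_two_mul]
    have c2 : Real.cos (2*Real.pi*2/5) = - Real.cos (Real.pi/5) := by
      rw [show 2*Real.pi*2/5 = Real.pi - Real.pi/5 by ring, Real.cos_pi_sub]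
    rw [c1, c2, Real.cos_pi_div_five]
    have h5 : Real.sqrt 5 ^ 2 = 5 := Real.sq_sqrt (by norm_num)
    nlinarith [h5]
  have hc := congrArg (Complex.ofReal) creal
  push_cast at hc
  linear_combination k3 * (-1) + k4 + cc1 - cc2 + hc

theorem stmt13 (ψ : DirichletCharacter ℂ 5) (hψ : ψ 2 = -1)
    (τ : ℝ) (hτ : τ ∈ Set.Icc (0:ℝ) 1)
    (f : ℂ → ℂ)
    (hf : ∀ s : ℂ, f s =
      (1 - (τ : ℂ)) * (1 + (Real.sqrt 5 : ℂ) * (5:ℂ) ^ (-s)) * riemannZeta s +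
        (τ : ℂ) * DirichletCharacter.LFunction ψ s) :
    ∀ s : ℂ, s ≠ 0 → (∀ n : ℕ, s ≠ (n : ℂ) + 1) →
      f s = (5:ℂ) ^ (-s + 1/2) * 2 * (2 * (Real.pi : ℂ)) ^ (s - 1) *
        Complex.Gamma (1 - s) * Complex.sin ((Real.pi : ℂ) * s / 2) * f (1 - s) := by
  intro s hs0 hs1
  -- character values
  have h4 : ψ 4 = 1 := by
    have : (4 : ZMod 5) = 2 * 2 := by decide
    rw [this, map_mul, hψ]; ring
  have h3 : ψ 3 = -1 := by
    have : (3 : ZMod 5) = 2 * 4 := by decide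
    rw [this, map_mul, hψ, h4]; ring
  have h1 : ψ 1 = 1 := map_one ψ
  have h0 : ψ 0 = 0 := ψ.map_nonunit (by decide)
  have hquad : ψ.IsQuadratic := by
    intro a
    have ha : a = 0 ∨ a = 1 ∨ a = 2 ∨ a = 3 ∨ a = 4 := by revert a; decide
    rcases ha with rfl|rfl|rfl|rfl|rfl <;> simp [h0, h1, hψ, h3, h4]
  have hne : ψ ≠ 1 := by
    intro h
    rw [h] at hψ
    simp [MulChar.one_apply (by decide : IsUnit (2 : ZMod 5))] at hψ
    norm_num at hψ
  have hprim : ψ.IsPrimitive := by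
    have hd := ψ.conductor_dvd_level
    rcases (Nat.prime_five.eq_one_or_self_of_dvd _ hd) with h|h
    · exact absurd (DirichletCharacter.eq_one_iff_conductor_eq_one.mpr h) hne
    · exact h
  have heven : ∀ j : ZMod 5, ψ (-j) = ψ j := by
    intro j
    rw [show (-j : ZMod 5) = -1 * j by ring, map_mul, show (-1 : ZMod 5) = 4 by decide, h4, one_mul]
  -- hypotheses for functional equations at 1 - s
  have hs' : ∀ n : ℕ, (1 - s) ≠ -(n : ℂ) := by
    intro n h
    exact hs1 n (by linear_combination -h)
  have h1s : (1 - s) ≠ 1 := fun h => hs0 (by linear_combination -h)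
  -- sin/cos relation
  have hsc : Complex.cos ((Real.pi : ℂ) * (1 - s) / 2) = Complex.sin ((Real.pi : ℂ) * s / 2) := by
    rw [show (Real.pi : ℂ) * (1 - s) / 2 = (Real.pi : ℂ) / 2 - (Real.pi : ℂ) * s / 2 by ring,
      Complex.cos_pi_div_two_sub]
  -- zeta functional equation
  have hz : riemannZeta s =
      2 * (2 * (Real.pi : ℂ)) ^ (s - 1) * Complex.Gamma (1 - s) *
        Complex.sin ((Real.pi : ℂ) * s / 2) * riemannZeta (1 - s) := by
    have := riemannZeta_one_sub (s := 1 - s) hs' h1s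
    rw [sub_sub_cancel, show -(1 - s) = s - 1 by ring, hsc] at this
    exact this
  -- L-function functional equation
  have hg : gaussSum ψ ZMod.stdAddChar = (Real.sqrt 5 : ℂ) := gauss5 ψ h0 h1 hψ h3 h4
  have hF : ZMod.dft (⇑ψ) = fun j => (Real.sqrt 5 : ℂ) * ψ j := by
    funext j
    rw [hprim.fourierTransform_eq_inv_mul_gaussSum, hquad.inv, heven, hg, mul_comm]
  have hL : DirichletCharacter.LFunction ψ s =
      (Real.sqrt 5 : ℂ) * (5:ℂ) ^ (-s) * (2 * (2 * (Real.pi : ℂ)) ^ (s - 1) *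
        Complex.Gamma (1 - s) * Complex.sin ((Real.pi : ℂ) * s / 2)) *
        DirichletCharacter.LFunction ψ (1 - s) := by
    have key := ZMod.LFunction_one_sub (⇑ψ) (s := 1 - s) hs' (Or.inl h0)
    rw [sub_sub_cancel] at key
    have hnegψ : (fun x : ZMod 5 => ψ (-x)) = ⇑ψ := funext heven
    rw [hnegψ, hF, zmodLFunction_const_mul, show (1 - s - 1 : ℂ) = -s by ring,
      show -(1 - s) = s - 1 by ring] at key
    have hcos : Complex.exp ((Real.pi : ℂ) * I * (1 - s) / 2) +
        Complex.exp (-(Real.pi : ℂ) * I * (1 - s) / 2) =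
        2 * Complex.sin ((Real.pi : ℂ) * s / 2) := by
      rw [← hsc, Complex.two_cos]; ring_nf
    show ZMod.LFunction (⇑ψ) s = _
    rw [key]
    have hDL : DirichletCharacter.LFunction ψ (1 - s) = ZMod.LFunction (⇑ψ) (1 - s) := rfl
    rw [hDL]
    push_cast
    linear_combination ((5:ℂ) ^ (-s) * (2 * (Real.pi : ℂ)) ^ (s - 1) * Complex.Gamma (1 - s) *
      (Real.sqrt 5 : ℂ) * ZMod.LFunction (⇑ψ) (1 - s)) * hcos
  -- powers of 5
  have h5ne : (5:ℂ) ≠ 0 := by norm_num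
  have hr : (Real.sqrt 5 : ℂ) = (5:ℂ) ^ (1/2 : ℂ) := by
    rw [Real.sqrt_eq_rpow, Complex.ofReal_cpow (by norm_num : (0:ℝ) ≤ 5)]
    norm_num
  have hA : (Real.sqrt 5 : ℂ) * (5:ℂ) ^ (-s) = (5:ℂ) ^ (-s + 1/2) := by
    rw [hr, ← Complex.cpow_add _ _ h5ne, add_comm]
  have hB : (5:ℂ) ^ (-s + 1/2) * ((Real.sqrt 5 : ℂ) * (5:ℂ) ^ (-(1 - s))) = 1 := by
    rw [hr, ← Complex.cpow_add _ _ h5ne, ← Complex.cpow_add _ _ h5ne,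
      show (-s + 1/2) + (1/2 + -(1 - s)) = 0 by ring, Complex.cpow_zero]
  rw [hf s, hf (1 - s), hz, hL]
  linear_combination ((1 - (τ:ℂ)) * riemannZeta (1 - s) + (τ:ℂ) * DirichletCharacter.LFunction ψ (1 - s)) *
      ((2 * (Real.pi:ℂ)) ^ (s - 1) * 2 * Complex.Gamma (1 - s) * Complex.sin ((Real.pi:ℂ) * s / 2)) * hA -
    (1 - (τ:ℂ)) * ((2 * (Real.pi:ℂ)) ^ (s - 1) * 2 * Complex.Gamma (1 - s) *
      Complex.sin ((Real.pi:ℂ) * s / 2)) * riemannZeta (1 - s) * hB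
end
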